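/- arXiv:2307.15096 — 2 statements merged into one kernel-verified Lean document; each statement's English description precedes it below -/
import Mathlib

section
/- For real q > 1 and all n ∈ ℕ, c(q) · q^{n(n+1)/2} / (q-1)^n ≤ [n]_q^! ≤ q^{n(n+1)/2} / (q-1)^n, where c(q) = ∏_{j=0}^∞ (1 - q^{-j-1}). -/
/-- The `q`-factorial `[n]_q^! = ∏_{k=1}^n (q^k - 1)/(q - 1)` for real `q`. -/
noncomputable def qFact (q : ℝ) (n : ℕ) : ℝ :=
  ∏ k ∈ Finset.range n, (q ^ (k + 1) - 1) / (q - 1)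

open Finset Real

lemma summable_log_aux {x : ℝ} (hx0 : 0 < x) (hx1 : x < 1) :
    Summable (fun j : ℕ => Real.log (1 - x ^ (j + 1))) := by
  rw [← summable_neg_iff]
  have hlt : ∀ j : ℕ, x ^ (j + 1) < 1 := fun j => pow_lt_one₀ hx0.le hx1 (Nat.succ_ne_zero j)
  have hg : Summable (fun j : ℕ => x ^ (j+1) * (1-x)⁻¹) :=
    (summable_geometric_of_lt_one hx0.le hx1).mul_right _ |>.comp_injective (add_left_injective 1)
  have h1 : ∀ j : ℕ, 0 ≤ - Real.log (1 - x ^ (j + 1)) := by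
    intro j
    simp only [neg_nonneg]
    exact Real.log_nonpos (by linarith [hlt j, pow_pos hx0 (j+1)]) (by linarith [hlt j, pow_pos hx0 (j+1)])
  have h2 : ∀ j : ℕ, - Real.log (1 - x ^ (j + 1)) ≤ x ^ (j+1) * (1-x)⁻¹ := by
    intro j
    have hp : (0:ℝ) < x ^ (j+1) := pow_pos hx0 _
    have hlt1 := hlt j
    have h1' : (0:ℝ) < 1 - x ^ (j+1) := by linarith
    have hlog := Real.log_le_sub_one_of_pos (x := (1 - x ^ (j+1))⁻¹) (by positivity)
    rw [Real.log_inv] at hlog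
    have hxle : x ^ (j+1) ≤ x := by
      calc x ^ (j+1) ≤ x ^ 1 := pow_le_pow_of_le_one hx0.le hx1.le (by omega)
      _ = x := pow_one x
    have h2' : (1 - x ^ (j+1))⁻¹ ≤ (1-x)⁻¹ := by
      apply inv_anti₀ (by linarith) (by linarith)
    have h3 : (1 - x ^ (j+1))⁻¹ - 1 = x^(j+1) * (1 - x^(j+1))⁻¹ := by field_simp; ring
    nlinarith [inv_pos.mpr h1']
  exact Summable.of_nonneg_of_le h1 h2 hg

lemma sum_range_aux (n : ℕ) : ∑ k ∈ Finset.range n, (k + 1) = n * (n + 1) / 2 := by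
  induction n with
  | zero => simp
  | succ m ih =>
    rw [Finset.sum_range_succ, ih]
    have h : (m+1) * (m+1+1) = m*(m+1) + 2*(m+1) := by ring
    omega

/-- For real `q > 1` and all `n`,
`c(q) · q^{n(n+1)/2}/(q-1)^n ≤ [n]_q^! ≤ q^{n(n+1)/2}/(q-1)^n`,
where `c(q) = ∏_{j=1}^∞ (1 - q^{-j})`. -/
theorem stmt_9 (q : ℝ) (hq : 1 < q) (n : ℕ) :
    (∏' j : ℕ, (1 - (q⁻¹) ^ (j + 1))) * q ^ (n * (n + 1) / 2) / (q - 1) ^ n ≤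
        qFact q n ∧
      qFact q n ≤ q ^ (n * (n + 1) / 2) / (q - 1) ^ n := by
  have hq0 : (0:ℝ) < q := lt_trans one_pos hq
  set x : ℝ := q⁻¹ with hxdef
  have hx0 : 0 < x := inv_pos.mpr hq0
  have hx1 : x < 1 := inv_lt_one_of_one_lt₀ hq
  set f : ℕ → ℝ := fun j => 1 - x ^ (j + 1) with hfdef
  have hfpos : ∀ j, 0 < f j := fun j => by
    have h : x ^ (j + 1) < 1 := pow_lt_one₀ hx0.le hx1 (Nat.succ_ne_zero j)
    show (0:ℝ) < 1 - x ^ (j + 1)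
    linarith
  have hfle1 : ∀ j, f j ≤ 1 := fun j => by
    have h := pow_pos hx0 (j+1)
    show (1:ℝ) - x ^ (j + 1) ≤ 1
    linarith
  have hslog : ∀ m : ℕ, Summable (fun j : ℕ => Real.log (f (j + m))) := by
    intro m
    have := (summable_log_aux hx0 hx1).comp_injective (add_left_injective m)
    exact this
  have hmult_tail : Multipliable (fun j => f (j + n)) := by
    have := Real.multipliable_of_summable_log (f := fun j => f (j + n))
      (fun j => hfpos _) (hslog n)
    exact this
  have htail : ∏' j : ℕ, f (j + n) ≤ 1 := by
    have heq := Real.rexp_tsum_eq_tprod (f := fun j => f (j + n))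
      (fun j => hfpos _) (hslog n)
    rw [← heq]
    have hts : (∑' j : ℕ, Real.log (f (j + n))) ≤ 0 :=
      tsum_nonpos (fun j => Real.log_nonpos (hfpos _).le (hfle1 _))
    exact Real.exp_le_one_iff.mpr hts
  have hPnonneg : 0 ≤ ∏ j ∈ range n, f j := Finset.prod_nonneg (fun j _ => (hfpos j).le)
  have hPle1 : ∏ j ∈ range n, f j ≤ 1 :=
    Finset.prod_le_one (fun j _ => (hfpos j).le) (fun j _ => hfle1 j)
  have hsplit : (∏ j ∈ range n, f j) * ∏' j : ℕ, f (j + n) = ∏' j : ℕ, f j :=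
    hmult_tail.prod_mul_tprod_nat_mul'
  have htprod_le : ∏' j : ℕ, f j ≤ ∏ j ∈ range n, f j := by
    calc ∏' j : ℕ, f j = (∏ j ∈ range n, f j) * ∏' j : ℕ, f (j + n) := hsplit.symm
      _ ≤ (∏ j ∈ range n, f j) * 1 := mul_le_mul_of_nonneg_left htail hPnonneg
      _ = ∏ j ∈ range n, f j := mul_one _
  have hS : ∑ k ∈ range n, (k + 1) = n * (n + 1) / 2 := sum_range_aux n
  have hkey : qFact q n = q ^ (n * (n + 1) / 2) * (∏ j ∈ range n, f j) / (q - 1) ^ n := by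
    unfold qFact
    rw [Finset.prod_div_distrib, Finset.prod_const, Finset.card_range]
    congr 1
    have hfac : ∀ k ∈ range n, q ^ (k + 1) - 1 = q ^ (k+1) * f k := by
      intro k _
      simp only [hfdef, hxdef, mul_sub, mul_one, inv_pow]
      rw [mul_inv_cancel₀ (pow_ne_zero _ hq0.ne')]
    rw [Finset.prod_congr rfl hfac, Finset.prod_mul_distrib, ← hS,
      ← Finset.prod_pow_eq_pow_sum]
  have hq1 : (0:ℝ) < q - 1 := by linarith
  have hden : (0:ℝ) < (q - 1) ^ n := pow_pos hq1 n
  have hqpow : (0:ℝ) ≤ q ^ (n * (n + 1) / 2) := (pow_pos hq0 _).le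
  constructor
  · rw [hkey]
    have h : (∏' j : ℕ, f j) * q ^ (n * (n + 1) / 2) ≤
        q ^ (n * (n + 1) / 2) * ∏ j ∈ range n, f j := by
      rw [mul_comm]; exact mul_le_mul_of_nonneg_left htprod_le hqpow
    exact div_le_div_of_nonneg_right h hden.le
  · rw [hkey]
    have h : q ^ (n * (n + 1) / 2) * (∏ j ∈ range n, f j) ≤ q ^ (n * (n + 1) / 2) :=
      mul_le_of_le_one_right hqpow hPle1
    exact div_le_div_of_nonneg_right h hden.le
end

section
/- Let |q| > 1. A double sequence (a_{n,m}) of complex numbers satisfies |a_{n,m}| ≤ C A^{n+m} |q|^{nm} for some C, A > 0 if and only if there are r, B, D > 0 such that for each n the series y_n(x₂) = Σ_m a_{n,m} x₂^m converges and is bounded on the disc of radius r/|q|^n, with sup_{|x₂| ≤ r/|q|^n} |y_n(x₂)| ≤ D B^n. -/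
open Complex Metric Real

/-- Cauchy estimate: if `∑ c m * z^m` is summable with sum bounded by `M` on the closed
disc of radius `ρ`, then `|c m| * ρ^m ≤ M`. -/
lemma coeff_bound_aux {c : ℕ → ℂ} {ρ M : ℝ} (hρ : 0 < ρ)
    (h : ∀ z : ℂ, ‖z‖ ≤ ρ → Summable (fun m : ℕ => c m * z ^ m) ∧
      ‖∑' m : ℕ, c m * z ^ m‖ ≤ M) (m : ℕ) :
    ‖c m‖ * ρ ^ m ≤ M := by
  have hsum : Summable (fun m : ℕ => ‖c m‖ * ρ ^ m) := by
    have h1 : Summable (fun m : ℕ => c m * (ρ : ℂ) ^ m) :=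
      (h (ρ : ℂ) (by simp [abs_of_pos hρ])).1
    have h2 := summable_norm_iff.mpr h1
    simpa [norm_mul, norm_pow, Complex.norm_real, abs_of_pos hρ] using h2
  set p : FormalMultilinearSeries ℂ ℂ ℂ :=
    fun m => ContinuousMultilinearMap.mkPiRing ℂ (Fin m) (c m) with hp
  have hnorm : ∀ k, ‖p k‖ = ‖c k‖ := fun k => ContinuousMultilinearMap.norm_mkPiRing _
  set ρ' : NNReal := ⟨ρ, hρ.le⟩ with hρ'
  have hrad : (ρ' : ENNReal) ≤ p.radius := by
    apply p.le_radius_of_summable_norm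
    simp only [hnorm]; exact hsum
  have hradpos : 0 < p.radius :=
    lt_of_lt_of_le (by exact_mod_cast hρ) hrad
  have hball : HasFPowerSeriesOnBall p.sum p 0 p.radius :=
    p.hasFPowerSeriesOnBall hradpos
  have hsumeq : ∀ z : ℂ, p.sum z = ∑' k : ℕ, c k * z ^ k := by
    intro z
    unfold FormalMultilinearSeries.sum
    refine tsum_congr fun k => ?_
    simp [hp, ContinuousMultilinearMap.mkPiRing_apply, smul_eq_mul, mul_comm]
  have hsub : ∀ R : ℝ, R < ρ → closedBall (0 : ℂ) R ⊆ Metric.eball 0 p.radius := by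
    intro R hR z hz
    rw [Metric.mem_eball, edist_zero_right]
    have h1 : ‖z‖₊ < ρ' := by
      rw [← NNReal.coe_lt_coe]
      exact lt_of_le_of_lt (by simpa using hz) hR
    exact lt_of_lt_of_le (ENNReal.coe_lt_coe.mpr h1) hrad
  -- the key estimate for every radius 0 < R < ρ
  have key : ∀ R : ℝ, 0 < R → R < ρ → ‖c m‖ * R ^ m ≤ M := by
    intro R hR0 hRρ
    set R' : NNReal := ⟨R, hR0.le⟩ with hR'
    have hdiff : DifferentiableOn ℂ p.sum (closedBall (0 : ℂ) R') :=
      (hball.differentiableOn).mono (hsub R hRρ)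
    have hcauchy : HasFPowerSeriesOnBall p.sum (cauchyPowerSeries p.sum 0 R') 0 R' :=
      hdiff.hasFPowerSeriesOnBall (by exact_mod_cast hR0)
    have heq : cauchyPowerSeries p.sum 0 R' = p :=
      hcauchy.hasFPowerSeriesAt.eq_formalMultilinearSeries hball.hasFPowerSeriesAt
    -- bound the integral of ‖p.sum ∘ circleMap‖ by 2π M
    have hcont : Continuous fun θ : ℝ => ‖p.sum (circleMap 0 R θ)‖ := by
      refine ((hball.continuousOn.comp_continuous (continuous_circleMap 0 R) ?_)).norm
      intro θ
      apply hsub R hRρ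
      simp [mem_closedBall, Complex.dist_eq, norm_circleMap_zero, abs_of_pos hR0]
    have hptw : ∀ θ : ℝ, ‖p.sum (circleMap 0 R θ)‖ ≤ M := by
      intro θ
      have habs : ‖circleMap 0 R θ‖ ≤ ρ := by
        simp [norm_circleMap_zero, abs_of_pos hR0, hRρ.le]
      rw [hsumeq]
      exact (h _ habs).2
    have hint : (∫ θ : ℝ in (0)..(2 * π), ‖p.sum (circleMap 0 R θ)‖) ≤ 2 * π * M := by
      have := intervalIntegral.integral_mono_on (by positivity : (0:ℝ) ≤ 2 * π)
        (hcont.intervalIntegrable 0 (2 * π)) (intervalIntegrable_const (μ := MeasureTheory.volume) (c := M))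
        (fun θ _ => hptw θ)
      simpa [mul_comm] using this
    have hM0 : 0 ≤ M := le_trans (norm_nonneg _) (h 0 (by simp [hρ.le])).2
    have hb := norm_cauchyPowerSeries_le p.sum 0 (R' : ℝ) m
    rw [heq, hnorm] at hb
    have hb2 : ‖c m‖ ≤ M * (R⁻¹) ^ m := by
      refine hb.trans ?_
      have h2π : (0:ℝ) < 2 * π := by positivity
      have : (2 * π)⁻¹ * ∫ θ : ℝ in (0)..(2 * π), ‖p.sum (circleMap 0 R θ)‖ ≤ M := by
        rw [inv_mul_le_iff₀ h2π]
        simpa [mul_comm] using hint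
      have hRabs : |(R' : ℝ)| = R := by rw [hR']; exact abs_of_pos hR0
      rw [hRabs]
      exact mul_le_mul_of_nonneg_right this (by positivity)
    calc ‖c m‖ * R ^ m ≤ M * (R⁻¹) ^ m * R ^ m :=
          mul_le_mul_of_nonneg_right hb2 (by positivity)
      _ = M := by
          rw [mul_assoc, ← mul_pow, inv_mul_cancel₀ hR0.ne', one_pow, mul_one]
  -- pass to the limit R → ρ
  have hcont2 : ContinuousWithinAt (fun R : ℝ => ‖c m‖ * R ^ m) (Set.Iio ρ) ρ :=
    (continuous_const.mul (continuous_pow m)).continuousWithinAt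
  refine le_of_tendsto (hcont2.tendsto) ?_
  filter_upwards [Ioo_mem_nhdsLT_of_mem (Set.mem_Ioc.mpr ⟨half_lt_self hρ, le_rfl⟩)] with R hR
  exact key R (lt_trans (by positivity) hR.1) hR.2

/-- Characterization of the space `𝒪₀^q`: a double sequence satisfies
`|a_{n,m}| ≤ C A^{n+m} |q|^{nm}` iff for some `r, B, D > 0` each series
`y_n(x₂) = Σ_m a_{n,m} x₂^m` converges on the closed disc of radius `r/|q|^n`
with `|y_n(x₂)| ≤ D B^n` there. -/
theorem stmt_12 (q : ℂ) (hq : 1 < ‖q‖) (a : ℕ → ℕ → ℂ) :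
    (∃ C A : ℝ, 0 < C ∧ 0 < A ∧ ∀ n m : ℕ,
        ‖a n m‖ ≤ C * A ^ (n + m) * (‖q‖) ^ (n * m)) ↔
      (∃ r B D : ℝ, 0 < r ∧ 0 < B ∧ 0 < D ∧ ∀ n : ℕ, ∀ x₂ : ℂ,
        ‖x₂‖ ≤ r / (‖q‖) ^ n →
          Summable (fun m : ℕ => a n m * x₂ ^ m) ∧
            ‖∑' m : ℕ, a n m * x₂ ^ m‖ ≤ D * B ^ n) := by
  have hq0 : (0:ℝ) < ‖q‖ := lt_trans one_pos hq
  constructor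
  · rintro ⟨C, A, hC, hA, hbound⟩
    refine ⟨(2 * A)⁻¹, A, 2 * C, by positivity, hA, by positivity, ?_⟩
    intro n x₂ hx₂
    have hqn : (0:ℝ) < (‖q‖) ^ n := by positivity
    -- termwise bound: ‖a n m * x₂^m‖ ≤ C * A^n * (1/2)^m
    have hterm : ∀ m : ℕ, ‖a n m * x₂ ^ m‖ ≤ C * A ^ n * (1/2 : ℝ) ^ m := by
      intro m
      have hxm : ‖x₂‖ ^ m ≤ ((2 * A)⁻¹ / (‖q‖) ^ n) ^ m :=
        pow_le_pow_left₀ (norm_nonneg _) hx₂ m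
      calc ‖a n m * x₂ ^ m‖ = ‖a n m‖ * ‖x₂‖ ^ m := by
            simp [map_mul, map_pow]
        _ ≤ (C * A ^ (n + m) * (‖q‖) ^ (n * m)) *
              ((2 * A)⁻¹ / (‖q‖) ^ n) ^ m :=
            mul_le_mul (hbound n m) hxm (by positivity) (by positivity)
        _ = C * A ^ n * (1/2 : ℝ) ^ m := by
            rw [div_pow, ← pow_mul, pow_add]
            field_simp
            ring_nf
            rw [← mul_pow, mul_inv_cancel₀ hA.ne', one_pow, one_mul]
    have hgeom : Summable (fun m : ℕ => C * A ^ n * (1/2 : ℝ) ^ m) :=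
      (summable_geometric_of_lt_one (by norm_num) (by norm_num)).mul_left _
    have hs : Summable (fun m : ℕ => a n m * x₂ ^ m) :=
      Summable.of_norm_bounded hgeom hterm
    have hns : Summable (fun m : ℕ => ‖a n m * x₂ ^ m‖) :=
      Summable.of_nonneg_of_le (fun _ => norm_nonneg _) hterm hgeom
    refine ⟨hs, ?_⟩
    calc ‖∑' m : ℕ, a n m * x₂ ^ m‖
        ≤ ∑' m : ℕ, ‖a n m * x₂ ^ m‖ := norm_tsum_le_tsum_norm hns
      _ ≤ ∑' m : ℕ, C * A ^ n * (1/2 : ℝ) ^ m := by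
          exact Summable.tsum_le_tsum hterm hns hgeom
      _ = C * A ^ n * 2 := by
          rw [tsum_mul_left, tsum_geometric_of_lt_one (by norm_num) (by norm_num)]
          norm_num
      _ = 2 * C * A ^ n := by ring
  · rintro ⟨r, B, D, hr, hB, hD, h⟩
    set A : ℝ := max B (max r⁻¹ 1) with hA
    have hA1 : (1:ℝ) ≤ A := le_trans (le_max_right _ _) (le_max_right _ _)
    have hA0 : (0:ℝ) < A := lt_of_lt_of_le one_pos hA1
    refine ⟨D, A, hD, hA0, ?_⟩
    intro n m
    have hρ : (0:ℝ) < r / (‖q‖) ^ n := by positivity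
    have key := coeff_bound_aux hρ (h n) m
    have hqn : (0:ℝ) < (‖q‖) ^ n := by positivity
    -- from |a n m| * (r/|q|^n)^m ≤ D * B^n
    have h1 : ‖a n m‖ ≤ D * B ^ n * (r⁻¹) ^ m * (‖q‖) ^ (n * m) := by
      have h2 : ‖a n m‖ * (r / (‖q‖) ^ n) ^ m ≤ D * B ^ n := key
      rw [div_pow, ← pow_mul] at h2
      have h3 := mul_le_mul_of_nonneg_right h2
        (by positivity : (0:ℝ) ≤ (‖q‖) ^ (n * m) / r ^ m)
      calc ‖a n m‖
          = ‖a n m‖ * (r ^ m / (‖q‖) ^ (n * m)) *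
              ((‖q‖) ^ (n * m) / r ^ m) := by
            field_simp
        _ ≤ D * B ^ n * ((‖q‖) ^ (n * m) / r ^ m) := h3
        _ = D * B ^ n * (r⁻¹) ^ m * (‖q‖) ^ (n * m) := by
            rw [inv_pow]; ring
    refine h1.trans ?_
    have hBA : B ^ n ≤ A ^ n := pow_le_pow_left₀ hB.le (le_max_left _ _) n
    have hrA : (r⁻¹) ^ m ≤ A ^ m :=
      pow_le_pow_left₀ (by positivity) (le_trans (le_max_left _ _) (le_max_right _ _)) m
    rw [pow_add]
    have : D * B ^ n * (r⁻¹) ^ m ≤ D * (A ^ n * A ^ m) := by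
      calc D * B ^ n * (r⁻¹) ^ m ≤ D * A ^ n * A ^ m := by
            apply mul_le_mul (mul_le_mul_of_nonneg_left hBA hD.le) hrA (by positivity)
              (by positivity)
        _ = D * (A ^ n * A ^ m) := by ring
    exact mul_le_mul_of_nonneg_right this (by positivity)
end
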